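/- arXiv:2512.00480 — 3 statements merged into one kernel-verified Lean document; each statement's English description precedes it below -/
import Mathlib

section
/- Let R be a commutative ring, S a set, and α_1,…,α_n : S → R functions; for x ∈ R^n define F_x(z) = Σ_{τ=1}^n x_τ·α_τ(z). Fix i ∈ [n], q_1,…,q_k ∈ S, λ_1,…,λ_k ∈ R and a NONZERO ω ∈ R with Σ_{j=1}^k λ_j·α_τ(q_j) = ω·1_{τ=i} for every τ ∈ [n]. If every coordinate of x lies in {0,1} ⊆ R, then the element y = Σ_{j=1}^k λ_j·F_x(q_j) satisfies: y = ω if x_i = 1, and y ≠ ω if x_i = 0; consequently the indicator 1_{y=ω} (as an element of R) equals x_i. (Full correctness of the reconstruction algorithm in Theorem 3.1.) -/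
open Classical

/-- Full correctness of the reconstruction algorithm in Theorem 3.1. -/
theorem stmt1 {R S : Type*} [CommRing R] {n k : ℕ}
    (α : Fin n → S → R) (i : Fin n) (q : Fin k → S) (lam : Fin k → R) (ω : R)
    (hω : ω ≠ 0)
    (hspan : ∀ τ : Fin n, ∑ j : Fin k, lam j * α τ (q j) = if τ = i then ω else 0)
    (x : Fin n → R) (hx : ∀ τ, x τ = 0 ∨ x τ = 1) :
    (x i = 1 → (∑ j : Fin k, lam j * (∑ τ : Fin n, x τ * α τ (q j))) = ω) ∧
    (x i = 0 → (∑ j : Fin k, lam j * (∑ τ : Fin n, x τ * α τ (q j))) ≠ ω) ∧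
    (if (∑ j : Fin k, lam j * (∑ τ : Fin n, x τ * α τ (q j))) = ω then (1 : R) else 0)
      = x i := by
  have key : (∑ j : Fin k, lam j * (∑ τ : Fin n, x τ * α τ (q j))) = x i * ω := by
    calc ∑ j : Fin k, lam j * (∑ τ : Fin n, x τ * α τ (q j))
        = ∑ τ : Fin n, x τ * ∑ j : Fin k, lam j * α τ (q j) := by
          simp_rw [Finset.mul_sum]
          rw [Finset.sum_comm]
          congr 1; ext τ; congr 1; ext j; ring
      _ = x i * ω := by
          simp [hspan, Finset.sum_ite_eq', Finset.mul_sum]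
  have : Nontrivial R := nontrivial_of_ne ω 0 hω
  rw [key]
  rcases hx i with h | h <;> simp [h, hω, Ne.symm hω]
end

section
/- Let ι be a type, U, V, W finite subsets of ι, and i_1,i_2,i_3,τ_1,τ_2,τ_3 ∈ ι. Write U^0 = U, U^1 = U⊕{i_1}, V^0 = V, V^1 = V⊕{i_2}, W^0 = W, W^1 = W⊕{i_3}. Then in F_2 = ZMod 2: Σ_{(b_1,b_2,b_3)∈{0,1}^3} 1_{τ_1∈U^{b_1}}·1_{τ_2∈V^{b_2}}·1_{τ_3∈W^{b_3}} = 1_{(τ_1,τ_2,τ_3)=(i_1,i_2,i_3)}. (The eight-term cube reconstruction identity of the CGKS 2-server protocol with communication O(n^{1/3}), Section 4.1.) -/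
/-- The eight-term cube reconstruction identity of the CGKS 2-server protocol. -/
theorem stmt6 {ι : Type*} [DecidableEq ι] (U V W : Finset ι)
    (i₁ i₂ i₃ τ₁ τ₂ τ₃ : ι) :
    (∑ b : Bool × Bool × Bool,
      (if τ₁ ∈ (if b.1 then symmDiff U {i₁} else U) then (1 : ZMod 2) else 0) *
      (if τ₂ ∈ (if b.2.1 then symmDiff V {i₂} else V) then (1 : ZMod 2) else 0) *
      (if τ₃ ∈ (if b.2.2 then symmDiff W {i₃} else W) then (1 : ZMod 2) else 0))
    = if (τ₁, τ₂, τ₃) = (i₁, i₂, i₃) then 1 else 0 := by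
  have key : ∀ (S : Finset ι) (i τ : ι),
      ((if τ ∈ S then (1 : ZMod 2) else 0) + (if τ ∈ symmDiff S {i} then 1 else 0))
        = if τ = i then 1 else 0 := by
    intro S i τ
    rcases eq_or_ne τ i with rfl | h <;> by_cases hs : τ ∈ S <;>
      (first | simp [Finset.mem_symmDiff, hs, h] | simp [Finset.mem_symmDiff, hs]) <;> decide
  calc (∑ b : Bool × Bool × Bool,
      (if τ₁ ∈ (if b.1 then symmDiff U {i₁} else U) then (1 : ZMod 2) else 0) *
      (if τ₂ ∈ (if b.2.1 then symmDiff V {i₂} else V) then (1 : ZMod 2) else 0) *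
      (if τ₃ ∈ (if b.2.2 then symmDiff W {i₃} else W) then (1 : ZMod 2) else 0))
      = ((if τ₁ ∈ U then (1 : ZMod 2) else 0) + (if τ₁ ∈ symmDiff U {i₁} then 1 else 0)) *
        ((if τ₂ ∈ V then (1 : ZMod 2) else 0) + (if τ₂ ∈ symmDiff V {i₂} then 1 else 0)) *
        ((if τ₃ ∈ W then (1 : ZMod 2) else 0) + (if τ₃ ∈ symmDiff W {i₃} then 1 else 0)) := by
        simp only [Fintype.sum_prod_type, Fintype.sum_bool, Bool.false_eq_true,
          if_true, if_false]
        ring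
    _ = (if τ₁ = i₁ then (1 : ZMod 2) else 0) * (if τ₂ = i₂ then 1 else 0) *
        (if τ₃ = i₃ then 1 else 0) := by rw [key, key, key]
    _ = if (τ₁, τ₂, τ₃) = (i₁, i₂, i₃) then 1 else 0 := by
        by_cases h1 : τ₁ = i₁ <;> by_cases h2 : τ₂ = i₂ <;> by_cases h3 : τ₃ = i₃ <;>
          simp [h1, h2, h3, Prod.ext_iff]
end

section
/- Let F be a field, let g ∈ F be an element of finite multiplicative order m ≥ 1, and define ĝ : ZMod m → F by ĝ(a) = g^{a.val} (the lift of a to {0,…,m−1}). Let S ⊆ ZMod m, let ρ_1,…,ρ_k ∈ F and d_1,…,d_k ∈ ZMod m satisfy Σ_{j=1}^k ρ_j = 1 and Σ_{j=1}^k ρ_j·ĝ(d_j·δ) = 0 for every δ ∈ S. Let u_1,…,u_n, v_1,…,v_n ∈ (ZMod m)^h be an S-matching family, i.e., ⟨u_i, v_i⟩ = 0 for all i ∈ [n] and ⟨u_τ, v_i⟩ ∈ S for all τ ≠ i, where ⟨·,·⟩ is the standard inner product over ZMod m. Then for all i, τ ∈ [n] and all w ∈ (ZMod m)^h: Σ_{j=1}^k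 ρ_j·ĝ(⟨u_τ, w + d_j·v_i⟩) = ĝ(⟨u_τ, w⟩) if τ = i, and = 0 if τ ≠ i. (The span-capability verification of Efremenko's and Raghavendra's matching-vector protocols, Sections 4.3.2 and 4.4.1.) -/
lemma ghat_add {F : Type*} [Field F] {m : ℕ} (hm : 1 ≤ m) (g : F)
    (hord : orderOf g = m) (a b : ZMod m) :
    g ^ (a + b).val = g ^ a.val * g ^ b.val := by
  subst hord
  haveI : NeZero (orderOf g) := ⟨by omega⟩
  rw [ZMod.val_add, pow_mod_orderOf, pow_add]

/-- Span-capability verification of Efremenko's and Raghavendra's matching-vector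
protocols: with `ĝ(a) = g^{a.val}`, an `S`-decoding polynomial and an `S`-matching
family, `Σ_j ρ_j·ĝ(⟨u_τ, w + d_j·v_i⟩)` equals `ĝ(⟨u_τ, w⟩)` if `τ = i` and `0`
otherwise. -/
theorem stmt18 {F : Type*} [Field F] {m : ℕ} (hm : 1 ≤ m) (g : F)
    (hord : orderOf g = m) (S : Set (ZMod m)) {k n h : ℕ}
    (ρ : Fin k → F) (d : Fin k → ZMod m)
    (hρ1 : ∑ j : Fin k, ρ j = 1)
    (hρ0 : ∀ δ ∈ S, ∑ j : Fin k, ρ j * g ^ (d j * δ).val = 0)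
    (u v : Fin n → Fin h → ZMod m)
    (hmatch1 : ∀ i : Fin n, ∑ c : Fin h, u i c * v i c = 0)
    (hmatch2 : ∀ i τ : Fin n, τ ≠ i → (∑ c : Fin h, u τ c * v i c) ∈ S) :
    ∀ (i τ : Fin n) (w : Fin h → ZMod m),
      ∑ j : Fin k, ρ j * g ^ (∑ c : Fin h, u τ c * (w c + d j * v i c)).val
        = if τ = i then g ^ (∑ c : Fin h, u τ c * w c).val else 0 := by
  intro i τ w
  have key : ∀ j : Fin k,
      (∑ c : Fin h, u τ c * (w c + d j * v i c))
        = (∑ c : Fin h, u τ c * w c) + d j * (∑ c : Fin h, u τ c * v i c) := by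
    intro j
    rw [Finset.mul_sum, ← Finset.sum_add_distrib]
    congr 1; ext c; ring
  have step : ∀ j : Fin k,
      ρ j * g ^ (∑ c : Fin h, u τ c * (w c + d j * v i c)).val
        = g ^ (∑ c : Fin h, u τ c * w c).val *
          (ρ j * g ^ (d j * ∑ c : Fin h, u τ c * v i c).val) := by
    intro j
    rw [key j, ghat_add hm g hord]
    ring
  simp only [step]
  rw [← Finset.mul_sum]
  by_cases hti : τ = i
  · subst hti
    simp [hmatch1 τ, hρ1]
  · simp only [hti, if_false]
    rw [hρ0 _ (hmatch2 i τ hti)]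
    ring
end
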